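/- Non-spanned dimension reduction: Let s be a partial outmap of the n-hypercube and i a dimension such that all known vertices agree in coordinate i (i is non-spanned). Then s is completable to a USO if and only if the projected partial outmap s^{[n]∖{i}} on the (n−1)-hypercube (obtained by deleting coordinate i from vertices and outmap values of known vertices) is completable. -/
import Mathlib


/-- `s` is the outmap of a unique sink orientation (Szabó–Welzl criterion). -/
def IsUSO {ι : Type*} (s : (ι → Bool) → (ι → Bool)) : Prop :=
  ∀ u v : ι → Bool, u ≠ v → ∃ i, u i ≠ v i ∧ s u i ≠ s v i

/-- A partial outmap is completable if some USO outmap agrees with it on all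
known vertices. -/
def Completable {ι : Type*} (s : (ι → Bool) → Option (ι → Bool)) : Prop :=
  ∃ t : (ι → Bool) → (ι → Bool), IsUSO t ∧ ∀ u a, s u = some a → t u = a

open Classical in
/-- The projection of a partial outmap obtained by deleting coordinate `i`
from the vertices and outmap values of the known vertices. -/
noncomputable def projPO {ι : Type*} (s : (ι → Bool) → Option (ι → Bool)) (i : ι) :
    ({j : ι // j ≠ i} → Bool) → Option ({j : ι // j ≠ i} → Bool) :=
  fun w =>
    if h : ∃ u : ι → Bool, (∀ j : {j : ι // j ≠ i}, u j.1 = w j) ∧ (s u).isSome then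
      (s h.choose).map (fun a => fun j : {j : ι // j ≠ i} => a j.1)
    else none

/-- Non-spanned dimension reduction: if all known vertices of a partial outmap
agree in coordinate `i`, then the partial outmap is completable iff its
projection away from coordinate `i` is completable. -/
theorem stmt19 {ι : Type*} [Fintype ι] [DecidableEq ι]
    (s : (ι → Bool) → Option (ι → Bool)) (i : ι)
    (hns : ∀ u v : ι → Bool, (s u).isSome → (s v).isSome → u i = v i) :
    Completable s ↔ Completable (projPO s i) := by
  classical
  -- the common `i`-coordinate of known vertices
  set b : Bool := if h : ∃ u : ι → Bool, (s u).isSome then h.choose i else false with hbdef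
  have hbk : ∀ u : ι → Bool, (s u).isSome → u i = b := by
    intro u hu
    have hex : ∃ u : ι → Bool, (s u).isSome := ⟨u, hu⟩
    have h1 := hns u hex.choose hu hex.choose_spec
    rw [hbdef, dif_pos hex, h1]
  -- restriction of a vertex
  set res : (ι → Bool) → ({j : ι // j ≠ i} → Bool) := fun u j => u j.1 with hres
  -- uniqueness of known vertices with a given restriction
  have huniq : ∀ u u' : ι → Bool, (s u).isSome → (s u').isSome →
      (∀ j : {j : ι // j ≠ i}, u' j.1 = res u j) → u' = u := by
    intro u u' hu hu' hr
    funext k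
    by_cases hk : k = i
    · subst hk
      rw [hbk u' hu', hbk u hu]
    · exact hr ⟨k, hk⟩
  have hproj : ∀ u a, s u = some a →
      projPO s i (res u) = some (fun j : {j : ι // j ≠ i} => a j.1) := by
    intro u a hu
    have hex : ∃ u' : ι → Bool, (∀ j : {j : ι // j ≠ i}, u' j.1 = res u j) ∧ (s u').isSome :=
      ⟨u, fun j => rfl, by simp [hu]⟩
    have hch : hex.choose = u :=
      huniq u hex.choose (by simp [hu]) hex.choose_spec.2 hex.choose_spec.1
    rw [projPO, dif_pos hex, hch, hu, Option.map_some]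
  constructor
  · rintro ⟨t, ht, hagree⟩
    -- extend a small vertex into the facet `u i = b`
    set ext : ({j : ι // j ≠ i} → Bool) → (ι → Bool) :=
      fun w k => if h : k = i then b else w ⟨k, h⟩ with hext
    refine ⟨fun w => res (t (ext w)), ?_, ?_⟩
    · intro w w' hne
      have hee : ext w ≠ ext w' := by
        intro h
        apply hne
        funext j
        have := congrFun h j.1
        simpa [hext, j.2] using this
      obtain ⟨k, hk1, hk2⟩ := ht _ _ hee
      have hki : k ≠ i := by
        intro h; subst h; simp [hext] at hk1
      refine ⟨⟨k, hki⟩, ?_, hk2⟩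
      simpa [hext, hki] using hk1
    · intro w a hwa
      rw [projPO] at hwa
      split_ifs at hwa with h
      obtain ⟨a0, ha0⟩ := Option.isSome_iff_exists.mp h.choose_spec.2
      rw [ha0, Option.map_some] at hwa
      have hu0 : h.choose i = b := hbk h.choose (by rw [ha0]; rfl)
      have hew : ext w = h.choose := by
        funext k
        by_cases hk : k = i
        · subst hk; simp [hext, hu0]
        · simp [hext, hk, h.choose_spec.1 ⟨k, hk⟩]
      have hta := hagree _ _ ha0
      show res (t (ext w)) = a
      rw [hew, hta]
      exact Option.some.inj hwa
  · rintro ⟨t, ht, hagree⟩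
    -- orientation of the `i`-edges: agree with `s` on known edges
    set d : ({j : ι // j ≠ i} → Bool) → Bool := fun w =>
      if h : ∃ u : ι → Bool, (∀ j : {j : ι // j ≠ i}, u j.1 = w j) ∧ (s u).isSome then
        ((s h.choose).getD (fun _ => false)) i
      else false with hd
    refine ⟨fun u k => if hk : k = i then
        (if u i = b then d (res u) else ! d (res u))
      else t (res u) ⟨k, hk⟩, ?_, ?_⟩
    · intro u v huv
      by_cases hrr : res u = res v
      · -- u and v differ only in coordinate i
        have hui : u i ≠ v i := by
          intro h
          apply huv
          funext k
          by_cases hk : k = i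
          · subst hk; exact h
          · exact congrFun hrr ⟨k, hk⟩
        refine ⟨i, hui, ?_⟩
        simp only [dif_pos rfl, hrr]
        by_cases hub : u i = b
        · have hvb : v i ≠ b := by rw [← hub]; exact fun h => hui h.symm
          simp [hub, hvb]
        · have boolcase : ∀ x y z : Bool, x ≠ z → x ≠ y → y = z := by decide
          have hvb : v i = b := boolcase (u i) (v i) b hub hui
          simp [hub, hvb]
      · obtain ⟨j, hj1, hj2⟩ := ht _ _ hrr
        refine ⟨j.1, hj1, ?_⟩
        simpa [j.2] using hj2
    · intro u a hu
      have husome : (s u).isSome := by simp [hu]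
      have hub : u i = b := hbk u husome
      have htres : t (res u) = fun j : {j : ι // j ≠ i} => a j.1 :=
        hagree _ _ (hproj u a hu)
      funext k
      beta_reduce
      by_cases hk : k = i
      · rw [dif_pos hk, if_pos hub, hk]
        have hex : ∃ u' : ι → Bool, (∀ j : {j : ι // j ≠ i}, u' j.1 = res u j) ∧ (s u').isSome :=
          ⟨u, fun j => rfl, husome⟩
        have hch : hex.choose = u :=
          huniq u hex.choose husome hex.choose_spec.2 hex.choose_spec.1
        simp only [hd, dif_pos hex, hch, hu, Option.getD_some]
      · simp only [dif_neg hk]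
        rw [htres]
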